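/- For all n×n real matrices L and G, setting F = L − tr(L)·I (the gradient of the Hamiltonian H_Sem = (tr(L_S²) − tr(L_A²) − (tr L_S)²)/2 with respect to ((·,·))), one has ((L, a([[F,G]]) − [[a(F),G]] − [[F,a(G)]])) = −((L, [[ρ(L), G]])). (This is the Semenov-Tian-Shansky half of the trihamiltonian recursion P_Sem dH_Sem = P_Lin dH_Lin.) -/

import Mathlib

open Matrix

noncomputable section

/-- Symmetric part of a matrix. -/
def symPart {n : ℕ} (L : Matrix (Fin n) (Fin n) ℝ) : Matrix (Fin n) (Fin n) ℝ :=
  (1/2 : ℝ) • (L + Lᵀ)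

/-- Antisymmetric part of a matrix. -/
def skewPart {n : ℕ} (L : Matrix (Fin n) (Fin n) ℝ) : Matrix (Fin n) (Fin n) ℝ :=
  (1/2 : ℝ) • (L - Lᵀ)

/-- Commutator. -/
def mcomm {n : ℕ} (A B : Matrix (Fin n) (Fin n) ℝ) : Matrix (Fin n) (Fin n) ℝ :=
  A * B - B * A

/-- Jordan product. -/
def jord {n : ℕ} (A B : Matrix (Fin n) (Fin n) ℝ) : Matrix (Fin n) (Fin n) ℝ :=
  (1/2 : ℝ) • (A * B + B * A)

/-- The non-standard Lie bracket [[L,M]]. -/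
def dbr {n : ℕ} (L M : Matrix (Fin n) (Fin n) ℝ) : Matrix (Fin n) (Fin n) ℝ :=
  mcomm (symPart L) (symPart M) - mcomm (skewPart L) (skewPart M)
    - mcomm (symPart L) (skewPart M) - mcomm (skewPart L) (symPart M)

/-- The commutative product L ⊙ M. -/
def odot {n : ℕ} (L M : Matrix (Fin n) (Fin n) ℝ) : Matrix (Fin n) (Fin n) ℝ :=
  jord (symPart L) (symPart M) - jord (skewPart L) (skewPart M)
    + jord (skewPart L) (symPart M) + jord (symPart L) (skewPart M)

/-- ρ(L) = L_p − L_n: strictly upper part minus strictly lower part. -/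
def rho {n : ℕ} (L : Matrix (Fin n) (Fin n) ℝ) : Matrix (Fin n) (Fin n) ℝ :=
  Matrix.of fun i j => if i < j then L i j else if j < i then -(L i j) else 0

/-- a(L) = ρ(L_S). -/
def aMap {n : ℕ} (L : Matrix (Fin n) (Fin n) ℝ) : Matrix (Fin n) (Fin n) ℝ :=
  rho (symPart L)

/-- The scalar product ((L,M)) = tr(L Mᵀ). -/
def form {n : ℕ} (L M : Matrix (Fin n) (Fin n) ℝ) : ℝ :=
  (L * Mᵀ).trace


section Aux
variable {n : ℕ}

lemma rho_transpose {n : ℕ} (L : Matrix (Fin n) (Fin n) ℝ) : (rho L)ᵀ = - rho (Lᵀ) := by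
  ext i j
  simp only [rho, transpose_apply, of_apply, neg_apply]
  rcases lt_trichotomy i j with h|h|h
  · simp [h, not_lt.mpr h.le, h.ne']
  · simp [h]
  · simp [h, not_lt.mpr h.le, h.ne']

lemma rho_neg {n : ℕ} (L : Matrix (Fin n) (Fin n) ℝ) : rho (-L) = - rho L := by
  ext i j; simp only [rho, of_apply, Matrix.neg_apply]; split_ifs <;> ring

lemma rho_add {n : ℕ} (A B : Matrix (Fin n) (Fin n) ℝ) : rho (A + B) = rho A + rho B := by
  ext i j; simp only [rho, of_apply, Matrix.add_apply]; split_ifs <;> ring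

lemma rho_shift {n : ℕ} (L : Matrix (Fin n) (Fin n) ℝ) (c : ℝ) :
    rho (L - c • (1 : Matrix (Fin n) (Fin n) ℝ)) = rho L := by
  ext i j
  simp only [rho, of_apply, Matrix.sub_apply, Matrix.smul_apply, one_apply, smul_eq_mul]
  rcases lt_trichotomy i j with h|h|h
  · simp [h, h.ne]
  · simp [h]
  · simp [h, not_lt.mpr h.le, h.ne']

lemma trace_rho_mul {n : ℕ} (A B : Matrix (Fin n) (Fin n) ℝ) :
    (rho A * B).trace = -((A * rho B).trace) := by
  simp only [Matrix.trace, Matrix.diag, mul_apply]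
  rw [← Finset.sum_neg_distrib]
  refine Finset.sum_congr rfl fun i _ => ?_
  rw [← Finset.sum_neg_distrib]
  refine Finset.sum_congr rfl fun k _ => ?_
  simp only [rho, of_apply]
  rcases lt_trichotomy i k with h|h|h
  · simp [h, not_lt.mpr h.le, h.ne']
  · simp [h]
  · simp [h, not_lt.mpr h.le, h.ne']

lemma symPart_transpose (L : Matrix (Fin n) (Fin n) ℝ) : (symPart L)ᵀ = symPart L := by
  simp [symPart, transpose_add, transpose_smul, add_comm]
lemma skewPart_transpose (L : Matrix (Fin n) (Fin n) ℝ) : (skewPart L)ᵀ = -skewPart L := by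
  simp only [skewPart, transpose_smul, transpose_sub, transpose_transpose, smul_sub]
  module
lemma symPart_of_symm {L : Matrix (Fin n) (Fin n) ℝ} (h : Lᵀ = L) : symPart L = L := by
  rw [symPart, h]; ext i j; simp; ring
lemma symPart_of_skew {L : Matrix (Fin n) (Fin n) ℝ} (h : Lᵀ = -L) : symPart L = 0 := by
  rw [symPart, h]; ext i j; simp
lemma skewPart_of_symm {L : Matrix (Fin n) (Fin n) ℝ} (h : Lᵀ = L) : skewPart L = 0 := by
  rw [skewPart, h]; ext i j; simp
lemma skewPart_of_skew {L : Matrix (Fin n) (Fin n) ℝ} (h : Lᵀ = -L) : skewPart L = L := by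
  rw [skewPart, h]; ext i j; simp; ring
lemma symPart_add (A B : Matrix (Fin n) (Fin n) ℝ) : symPart (A + B) = symPart A + symPart B := by
  simp [symPart, transpose_add, smul_add]; abel
lemma skewPart_add (A B : Matrix (Fin n) (Fin n) ℝ) : skewPart (A + B) = skewPart A + skewPart B := by
  simp [skewPart, transpose_add, smul_add, smul_sub]; abel
lemma symPart_shift (L : Matrix (Fin n) (Fin n) ℝ) (c : ℝ) :
    symPart (L - c • (1 : Matrix (Fin n) (Fin n) ℝ)) = symPart L - c • 1 := by
  ext i j
  simp [symPart, transpose_apply, one_apply]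
  rcases eq_or_ne i j with h|h
  · simp [h]; ring
  · simp [h, Ne.symm h]; ring
lemma skewPart_shift (L : Matrix (Fin n) (Fin n) ℝ) (c : ℝ) :
    skewPart (L - c • (1 : Matrix (Fin n) (Fin n) ℝ)) = skewPart L := by
  ext i j
  simp [skewPart, transpose_apply, one_apply]
lemma mcomm_shift (X Y : Matrix (Fin n) (Fin n) ℝ) (c : ℝ) :
    mcomm (X - c • (1 : Matrix (Fin n) (Fin n) ℝ)) Y = mcomm X Y := by
  simp [mcomm, sub_mul, mul_sub, smul_mul_assoc, mul_smul_comm]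
lemma form_sub (L M N : Matrix (Fin n) (Fin n) ℝ) : form L (M - N) = form L M - form L N := by
  simp [form, transpose_sub, mul_sub]

lemma symPart_sub (A B : Matrix (Fin n) (Fin n) ℝ) : symPart (A - B) = symPart A - symPart B := by
  simp [symPart, transpose_sub, smul_sub]; abel
lemma symPart_neg (A : Matrix (Fin n) (Fin n) ℝ) : symPart (-A) = -symPart A := by
  simp only [symPart, transpose_neg, smul_add, smul_neg, neg_add]
lemma mcomm_zero_right (X : Matrix (Fin n) (Fin n) ℝ) : mcomm X 0 = 0 := by simp [mcomm]
lemma mcomm_zero_left (X : Matrix (Fin n) (Fin n) ℝ) : mcomm 0 X = 0 := by simp [mcomm]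
lemma mcomm_transpose (A B : Matrix (Fin n) (Fin n) ℝ) : (mcomm A B)ᵀ = mcomm Bᵀ Aᵀ := by
  simp [mcomm, transpose_sub, transpose_mul]

lemma key (S A GS GA RS RA QS : Matrix (Fin n) (Fin n) ℝ)
    (hS : Sᵀ = S) (hA : Aᵀ = -A) (hGS : GSᵀ = GS) (hGA : GAᵀ = -GA)
    (hRS : RSᵀ = -RS) (hRA : RAᵀ = RA) (hQS : QSᵀ = -QS) :
    form (RS + RA) (symPart (dbr (S + A) (GS + GA)))
      - form (S + A) (dbr RS (GS + GA))
      - form (S + A) (dbr (S + A) QS)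
      + form (S + A) (dbr (RS + RA) (GS + GA)) = 0 := by
  have h1 : dbr (S+A) (GS+GA) = mcomm S GS - mcomm A GA - mcomm S GA - mcomm A GS := by
    simp [dbr, symPart_add, skewPart_add, symPart_of_symm hS, symPart_of_skew hA,
      symPart_of_symm hGS, symPart_of_skew hGA, skewPart_of_symm hS, skewPart_of_skew hA,
      skewPart_of_symm hGS, skewPart_of_skew hGA]
  have h2 : dbr RS (GS+GA) = -(mcomm RS GA) - mcomm RS GS := by
    simp [dbr, symPart_add, skewPart_add, symPart_of_skew hRS, skewPart_of_skew hRS,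
      symPart_of_symm hGS, symPart_of_skew hGA, skewPart_of_symm hGS, skewPart_of_skew hGA,
      mcomm_zero_left, mcomm_zero_right]
  have h3 : dbr (S+A) QS = -(mcomm A QS) - mcomm S QS := by
    simp [dbr, symPart_add, skewPart_add, symPart_of_symm hS, symPart_of_skew hA,
      skewPart_of_symm hS, skewPart_of_skew hA, symPart_of_skew hQS, skewPart_of_skew hQS,
      mcomm_zero_left, mcomm_zero_right]
  have h4 : dbr (RS+RA) (GS+GA) = mcomm RA GS - mcomm RS GA - mcomm RA GA - mcomm RS GS := by
    simp [dbr, symPart_add, skewPart_add, symPart_of_skew hRS, skewPart_of_skew hRS,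
      symPart_of_symm hRA, skewPart_of_symm hRA, symPart_of_symm hGS, symPart_of_skew hGA,
      skewPart_of_symm hGS, skewPart_of_skew hGA, mcomm_zero_left, mcomm_zero_right]
  have t1 : (mcomm S GS)ᵀ = -(mcomm S GS) := by
    rw [mcomm_transpose, hS, hGS]; simp [mcomm, neg_sub]
  have t2 : (mcomm A GA)ᵀ = -(mcomm A GA) := by
    rw [mcomm_transpose, hA, hGA]; simp [mcomm, neg_sub]
  have t3 : (mcomm S GA)ᵀ = mcomm S GA := by
    rw [mcomm_transpose, hS, hGA]; simp only [mcomm, neg_mul, mul_neg, neg_sub]; abel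
  have t4 : (mcomm A GS)ᵀ = mcomm A GS := by
    rw [mcomm_transpose, hA, hGS]; simp only [mcomm, neg_mul, mul_neg, neg_sub]; abel
  have h5 : symPart (dbr (S+A) (GS+GA)) = -(mcomm S GA) - mcomm A GS := by
    rw [h1, symPart_sub, symPart_sub, symPart_sub,
      symPart_of_skew t1, symPart_of_skew t2, symPart_of_symm t3, symPart_of_symm t4]
    abel
  rw [h2, h3, h4, h5]
  simp only [form, mcomm, transpose_sub, transpose_add, transpose_neg, transpose_mul,
    hS, hA, hGS, hGA, hRS, hRA, hQS, mul_neg, neg_mul, neg_neg, neg_sub, sub_mul, mul_sub,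
    add_mul, mul_add, trace_add, trace_sub, trace_neg, mul_assoc]
  ring_nf
  have tcyc : ∀ X Y Z : Matrix (Fin n) (Fin n) ℝ, (X*(Y*Z)).trace = (Y*(Z*X)).trace := by
    intro X Y Z; rw [Matrix.trace_mul_comm X (Y*Z), mul_assoc]
  have trev : ∀ X Y Z : Matrix (Fin n) (Fin n) ℝ, (X*(Y*Z)).trace = (Zᵀ*(Yᵀ*Xᵀ)).trace := by
    intro X Y Z
    rw [← Matrix.trace_transpose (X*(Y*Z)), transpose_mul, transpose_mul, mul_assoc]
  have r1 : (RS*(S*GA)).trace = (RS*(GA*S)).trace := by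
    rw [trev RS S GA, hRS, hS, hGA]
    simp only [neg_mul, mul_neg, neg_neg, trace_neg]
    rw [tcyc, tcyc]
  have r3 : (RS*(GS*A)).trace = (RS*(A*GS)).trace := by
    rw [trev RS GS A, hRS, hGS, hA]
    simp only [neg_mul, mul_neg, neg_neg, trace_neg]
    rw [tcyc, tcyc]
  have r5 : (S*(A*QS)).trace = (S*(QS*A)).trace := by
    rw [trev S A QS, hS, hA, hQS]
    simp only [neg_mul, mul_neg, neg_neg, trace_neg]
    rw [tcyc, tcyc]
  have r8 : (A*(GA*RA)).trace = (A*(RA*GA)).trace := by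
    rw [trev A GA RA, hA, hGA, hRA]
    simp only [neg_mul, mul_neg, neg_neg, trace_neg]
    rw [tcyc, tcyc]
  have r9 : (S*(GS*RA)).trace = (S*(RA*GS)).trace := by
    rw [trev S GS RA, hS, hGS, hRA, tcyc, tcyc]
  have c2a : (S*(GA*RA)).trace = (RA*(S*GA)).trace := by rw [tcyc, tcyc]
  have c2b : (S*(RA*GA)).trace = (RA*(GA*S)).trace := by rw [tcyc]
  have c4a : (A*(GS*RA)).trace = (RA*(A*GS)).trace := by rw [tcyc, tcyc]
  have c4b : (A*(RA*GS)).trace = (RA*(GS*A)).trace := by rw [tcyc]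
  have c5a : (A*(QS*S)).trace = (S*(A*QS)).trace := by rw [tcyc, tcyc]
  have c5b : (A*(S*QS)).trace = (S*(QS*A)).trace := by rw [tcyc]
  have c6 : (A*(A*QS)).trace = (A*(QS*A)).trace := by rw [tcyc]
  have c7 : (S*(S*QS)).trace = (S*(QS*S)).trace := by rw [tcyc]
  linear_combination (-1 : ℝ)*r1 + c2a - c2b + r3 + c4a - c4b - c5a + c5b - 2*r5 - c6 + c7 + r8 + r9


lemma form_rho {n : ℕ} (P N : Matrix (Fin n) (Fin n) ℝ) : form P (rho N) = form (rho P) N := by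
  rw [form, form, rho_transpose, mul_neg, trace_neg, trace_rho_mul]

lemma dbr_shift {n : ℕ} (L M : Matrix (Fin n) (Fin n) ℝ) (c : ℝ) :
    dbr (L - c • (1 : Matrix (Fin n) (Fin n) ℝ)) M = dbr L M := by
  rw [dbr, dbr, symPart_shift, skewPart_shift, mcomm_shift, mcomm_shift]

lemma aMap_shift {n : ℕ} (L : Matrix (Fin n) (Fin n) ℝ) (c : ℝ) :
    aMap (L - c • (1 : Matrix (Fin n) (Fin n) ℝ)) = aMap L := by
  rw [aMap, symPart_shift, rho_shift, aMap]

lemma sym_add_skew {n : ℕ} (L : Matrix (Fin n) (Fin n) ℝ) : symPart L + skewPart L = L := by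
  ext i j; simp [symPart, skewPart]; ring

end Aux

/-- The Semenov-Tian-Shansky half of the recursion P_Sem dH_Sem = P_Lin dH_Lin. -/
theorem stmt_11 {n : ℕ} (L G : Matrix (Fin n) (Fin n) ℝ) :
    form L (aMap (dbr (L - L.trace • (1 : Matrix (Fin n) (Fin n) ℝ)) G)
        - dbr (aMap (L - L.trace • (1 : Matrix (Fin n) (Fin n) ℝ))) G
        - dbr (L - L.trace • (1 : Matrix (Fin n) (Fin n) ℝ)) (aMap G))
      = - form L (dbr (rho L) G) := by
  have hk := key (symPart L) (skewPart L) (symPart G) (skewPart G)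
    (rho (symPart L)) (rho (skewPart L)) (rho (symPart G))
    (symPart_transpose L) (skewPart_transpose L) (symPart_transpose G) (skewPart_transpose G)
    (by rw [rho_transpose, symPart_transpose])
    (by rw [rho_transpose, skewPart_transpose, rho_neg, neg_neg])
    (by rw [rho_transpose, symPart_transpose])
  rw [← rho_add] at hk
  rw [sym_add_skew, sym_add_skew] at hk
  have ha1 : aMap L = rho (symPart L) := rfl
  have ha2 : aMap G = rho (symPart G) := rfl
  rw [← ha1, ← ha2] at hk
  have e1 : form L (aMap (dbr L G)) = form (rho L) (symPart (dbr L G)) := by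
    rw [aMap, form_rho]
  rw [dbr_shift, dbr_shift, aMap_shift, form_sub, form_sub, e1]
  linarith [hk]
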